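/- arXiv:1705.03749 — 3 statements merged into one kernel-verified Lean document; each statement's English description precedes it below -/
import Mathlib

section
/- Let n be a natural number and let y : ℝ → ℝ be four times continuously differentiable on a neighborhood of 0, with y(0) = 1 and y'(0) = 0, and suppose x·y''(x) + 2·y'(x) + x·y(x)ⁿ = 0 for all x in that neighborhood. Then y''(0) = −1/3 and y⁗(0) = n/5. -/
open Filter Set

lemma aux_mul_id (g : ℝ → ℝ) (hg : ContinuousAt g 0) :
    HasDerivAt (fun z => z * g z) (g 0) 0 := by
  rw [hasDerivAt_iff_tendsto_slope]
  have h1 : Tendsto g (nhdsWithin 0 {(0:ℝ)}ᶜ) (nhds (g 0)) :=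
    hg.continuousWithinAt.tendsto
  refine h1.congr' ?_
  filter_upwards [self_mem_nhdsWithin] with z hz
  have hz' : (z : ℝ) ≠ 0 := hz
  rw [slope_def_field, zero_mul, sub_zero, sub_zero, mul_div_cancel_left₀ _ hz']

theorem laneEmden_plus_derivs (n : ℕ) (y : ℝ → ℝ) (s : Set ℝ) (hs : s ∈ nhds (0 : ℝ))
    (hy : ContDiffOn ℝ 4 y s) (h0 : y 0 = 1) (h1 : deriv y 0 = 0)
    (hode : ∀ x ∈ s, x * deriv (deriv y) x + 2 * deriv y x + x * (y x) ^ n = 0) :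
    iteratedDeriv 2 y 0 = -1 / 3 ∧ iteratedDeriv 4 y 0 = n / 5 := by
  obtain ⟨u, hus, huo, hu0⟩ := mem_nhds_iff.mp hs
  set d1 := deriv y with hd1def
  set d2 := deriv d1 with hd2def
  set d3 := deriv d2 with hd3def
  set d4 := deriv d3 with hd4def
  have hy4 : ContDiffOn ℝ 4 y u := hy.mono hus
  have hc1 : ContDiffOn ℝ 3 d1 u := hy4.deriv_of_isOpen huo (by norm_num)
  have hc2 : ContDiffOn ℝ 2 d2 u := hc1.deriv_of_isOpen huo (by norm_num)
  have hc3 : ContDiffOn ℝ 1 d3 u := hc2.deriv_of_isOpen huo (by norm_num)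
  have hd4cont : ContinuousOn d4 u := hc3.continuousOn_deriv_of_isOpen huo le_rfl
  have hdy : ∀ z ∈ u, DifferentiableAt ℝ y z := fun z hz =>
    ((hy4.differentiableOn (by norm_num)) z hz).differentiableAt (huo.mem_nhds hz)
  have hdd1 : ∀ z ∈ u, DifferentiableAt ℝ d1 z := fun z hz =>
    ((hc1.differentiableOn (by norm_num)) z hz).differentiableAt (huo.mem_nhds hz)
  have hdd2 : ∀ z ∈ u, DifferentiableAt ℝ d2 z := fun z hz =>
    ((hc2.differentiableOn (by norm_num)) z hz).differentiableAt (huo.mem_nhds hz)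
  have hdd3 : ∀ z ∈ u, DifferentiableAt ℝ d3 z := fun z hz =>
    ((hc3.differentiableOn one_ne_zero) z hz).differentiableAt (huo.mem_nhds hz)
  set P : ℝ → ℝ := fun z => (n : ℝ) * (y z ^ (n - 1) * d1 z) with hPdef
  set Q := deriv P with hQdef
  have hPc : ContDiffOn ℝ 3 P u :=
    contDiffOn_const.mul (((hy4.pow (n-1)).of_le (by norm_num)).mul hc1)
  have hdP : ∀ z ∈ u, DifferentiableAt ℝ P z := fun z hz =>
    ((hPc.differentiableOn (by norm_num)) z hz).differentiableAt (huo.mem_nhds hz)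
  have hQcont : ContinuousOn Q u := hPc.continuousOn_deriv_of_isOpen huo (by norm_num)
  have hF : ∀ z ∈ u, z * d2 z + 2 * d1 z + z * (y z)^n = 0 := fun z hz => hode z (hus hz)
  -- first differentiation of the ODE
  have hG : ∀ z ∈ u, 3 * d2 z + z * d3 z + (y z)^n + z * P z = 0 := by
    intro z hz
    have hev : (fun x => x * d2 x + 2 * d1 x + x * (y x)^n) =ᶠ[nhds z] (fun _ => (0:ℝ)) := by
      filter_upwards [huo.mem_nhds hz] with w hw using hF w hw
    have hzero : deriv (fun x => x * d2 x + 2 * d1 x + x * (y x)^n) z = 0 := by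
      rw [hev.deriv_eq]; simp
    have hD : HasDerivAt (fun x => x * d2 x + 2 * d1 x + x * (y x)^n)
        ((1 * d2 z + z * d3 z) + 2 * d2 z +
          (1 * (y z)^n + z * ((n:ℝ) * y z ^ (n-1) * d1 z))) z :=
      (((hasDerivAt_id z).mul ((hdd2 z hz).hasDerivAt)).add
        (((hdd1 z hz).hasDerivAt).const_mul 2)).add
        ((hasDerivAt_id z).mul ((hdy z hz).hasDerivAt.pow n))
    have := hD.deriv
    rw [hzero] at this
    linear_combination -this
  -- second differentiation
  have hH : ∀ z ∈ u, 4 * d3 z + z * d4 z + 2 * P z + z * Q z = 0 := by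
    intro z hz
    have hev : (fun x => 3 * d2 x + x * d3 x + (y x)^n + x * P x) =ᶠ[nhds z] (fun _ => (0:ℝ)) := by
      filter_upwards [huo.mem_nhds hz] with w hw using hG w hw
    have hzero : deriv (fun x => 3 * d2 x + x * d3 x + (y x)^n + x * P x) z = 0 := by
      rw [hev.deriv_eq]; simp
    have hD : HasDerivAt (fun x => 3 * d2 x + x * d3 x + (y x)^n + x * P x)
        ((3 * d3 z + (1 * d3 z + z * d4 z) + (n:ℝ) * y z ^ (n-1) * d1 z) + (1 * P z + z * Q z)) z :=
      (((((hdd2 z hz).hasDerivAt).const_mul 3).add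
        ((hasDerivAt_id z).mul ((hdd3 z hz).hasDerivAt))).add
        ((hdy z hz).hasDerivAt.pow n)).add
        ((hasDerivAt_id z).mul ((hdP z hz).hasDerivAt))
    have := hD.deriv
    rw [hzero] at this
    simp only [hPdef]
    linear_combination -this
  -- value of y'' at 0
  have hd20 : d2 0 = -1/3 := by
    have := hG 0 hu0
    simp [h0] at this
    linarith
  -- value of Q at 0
  have hQ0 : Q 0 = -(n:ℝ)/3 := by
    have hP0 : HasDerivAt P ((n:ℝ) * ((↑(n-1) * y 0 ^ (n-1-1) * d1 0) * d1 0 + y 0 ^ (n-1) * d2 0)) 0 :=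
      ((((hdy 0 hu0).hasDerivAt.pow (n-1)).mul ((hdd1 0 hu0).hasDerivAt)).const_mul (n:ℝ))
    have := hP0.deriv
    rw [hQdef, this, h0, h1, hd20]
    ring
  -- third differentiation, only at 0
  have hev0 : (fun x => 4 * d3 x + x * d4 x + 2 * P x + x * Q x) =ᶠ[nhds 0] (fun _ => (0:ℝ)) := by
    filter_upwards [huo.mem_nhds hu0] with w hw using hH w hw
  have hzero0 : deriv (fun x => 4 * d3 x + x * d4 x + 2 * P x + x * Q x) 0 = 0 := by
    rw [hev0.deriv_eq]; simp
  have hD0 : HasDerivAt (fun x => 4 * d3 x + x * d4 x + 2 * P x + x * Q x)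
      ((4 * d4 0 + d4 0 + 2 * Q 0) + Q 0) 0 :=
    (((((hdd3 0 hu0).hasDerivAt).const_mul 4).add
      (aux_mul_id d4 (hd4cont.continuousAt (huo.mem_nhds hu0)))).add
      (((hdP 0 hu0).hasDerivAt).const_mul 2)).add
      (aux_mul_id Q (hQcont.continuousAt (huo.mem_nhds hu0)))
  have h5 := hD0.deriv
  rw [hzero0] at h5
  have hd40 : d4 0 = (n:ℝ)/5 := by rw [hQ0] at h5; linarith
  constructor
  · show iteratedDeriv 2 y 0 = -1/3
    rw [iteratedDeriv_succ, iteratedDeriv_succ, iteratedDeriv_zero]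
    exact hd20
  · rw [iteratedDeriv_succ, iteratedDeriv_succ, iteratedDeriv_succ, iteratedDeriv_succ, iteratedDeriv_zero]
    exact hd40
end

section
/- Let n be a natural number and let y : ℝ → ℝ be four times continuously differentiable on a neighborhood of 0, with y(0) = 1 and y'(0) = 0, and suppose x·y''(x) + 2·y'(x) − x·y(x)ⁿ = 0 for all x in that neighborhood. Then y''(0) = 1/3 and y⁗(0) = n/5. -/
/-- If `g` is continuous at `0`, then `x ↦ x * g x` has derivative `g 0` at `0`. -/
lemma hasDerivAt_id_mul_of_continuousAt (g : ℝ → ℝ) (hg : ContinuousAt g 0) :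
    HasDerivAt (fun x => x * g x) (g 0) 0 := by
  rw [hasDerivAt_iff_tendsto_slope]
  have heq : slope (fun x => x * g x) 0 =ᶠ[nhdsWithin (0:ℝ) {(0:ℝ)}ᶜ] g := by
    filter_upwards [self_mem_nhdsWithin] with x hx
    have hx' : x ≠ 0 := hx
    rw [slope_def_field, zero_mul, sub_zero, sub_zero, mul_div_cancel_left₀ _ hx']
  exact (hg.tendsto.mono_left nhdsWithin_le_nhds).congr' heq.symm

theorem laneEmden_minus_derivs (n : ℕ) (y : ℝ → ℝ) (s : Set ℝ) (hs : s ∈ nhds (0 : ℝ))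
    (hy : ContDiffOn ℝ 4 y s) (h0 : y 0 = 1) (h1 : deriv y 0 = 0)
    (hode : ∀ x ∈ s, x * deriv (deriv y) x + 2 * deriv y x - x * (y x) ^ n = 0) :
    iteratedDeriv 2 y 0 = 1 / 3 ∧ iteratedDeriv 4 y 0 = n / 5 := by
  set f1 := deriv y with hf1def
  set f2 := deriv f1 with hf2def
  set f3 := deriv f2 with hf3def
  set f4 := deriv f3 with hf4def
  set t := interior s with htdef
  have ht : IsOpen t := isOpen_interior
  have h0t : (0:ℝ) ∈ t := mem_interior_iff_mem_nhds.2 hs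
  have hts : t ⊆ s := interior_subset
  have hyt : ContDiffOn ℝ 4 y t := hy.mono hts
  have hc1 : ContDiffOn ℝ 3 f1 t := hyt.deriv_of_isOpen ht (by norm_num)
  have hc2 : ContDiffOn ℝ 2 f2 t := hc1.deriv_of_isOpen ht (by norm_num)
  have hc3 : ContDiffOn ℝ 1 f3 t := hc2.deriv_of_isOpen ht (by norm_num)
  have hc4 : ContDiffOn ℝ 0 f4 t := hc3.deriv_of_isOpen ht (by norm_num)
  have hdy : ∀ x ∈ t, HasDerivAt y (f1 x) x := fun x hx =>
    ((hyt.contDiffAt (ht.mem_nhds hx)).differentiableAt (by norm_num)).hasDerivAt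
  have hdf1 : ∀ x ∈ t, HasDerivAt f1 (f2 x) x := fun x hx =>
    ((hc1.contDiffAt (ht.mem_nhds hx)).differentiableAt (by norm_num)).hasDerivAt
  have hdf2 : ∀ x ∈ t, HasDerivAt f2 (f3 x) x := fun x hx =>
    ((hc2.contDiffAt (ht.mem_nhds hx)).differentiableAt (by norm_num)).hasDerivAt
  have hdf3 : ∀ x ∈ t, HasDerivAt f3 (f4 x) x := fun x hx =>
    ((hc3.contDiffAt (ht.mem_nhds hx)).differentiableAt (by norm_num)).hasDerivAt
  set u : ℝ → ℝ := fun x => y x ^ n with hudef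
  set u1 : ℝ → ℝ := fun x => (n:ℝ) * y x ^ (n-1) * f1 x with hu1def
  set u2 : ℝ → ℝ := fun x =>
    (n:ℝ) * ((↑(n-1) : ℝ) * y x ^ (n-1-1) * f1 x) * f1 x + (n:ℝ) * y x ^ (n-1) * f2 x
    with hu2def
  have hdu : ∀ x ∈ t, HasDerivAt u (u1 x) x := fun x hx => (hdy x hx).pow n
  have hdu1 : ∀ x ∈ t, HasDerivAt u1 (u2 x) x := fun x hx => by
    have hp : HasDerivAt (fun x => (n:ℝ) * y x ^ (n-1))
        ((n:ℝ) * ((↑(n-1):ℝ) * y x ^ (n-1-1) * f1 x)) x :=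
      ((hdy x hx).pow (n-1)).const_mul _
    exact hp.mul (hdf1 x hx)
  have htn : t ∈ nhds (0:ℝ) := ht.mem_nhds h0t
  set G : ℝ → ℝ := fun x => x * f2 x + 2 * f1 x - x * u x with hGdef
  set G1 : ℝ → ℝ := fun x => 3 * f2 x + x * f3 x - u x - x * u1 x with hG1def
  set G2 : ℝ → ℝ := fun x => 4 * f3 x + x * f4 x - 2 * u1 x - x * u2 x with hG2def
  have hG0 : G =ᶠ[nhds (0:ℝ)] (fun _ => (0:ℝ)) := by
    filter_upwards [htn] with x hx
    exact hode x (hts hx)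
  have hdG : ∀ x ∈ t, HasDerivAt G (G1 x) x := fun x hx => by
    have h := (((hasDerivAt_id x).mul (hdf2 x hx)).add ((hdf1 x hx).const_mul 2)).sub
      ((hasDerivAt_id x).mul (hdu x hx))
    have heq : G1 x = 1 * f2 x + id x * f3 x + 2 * f2 x - (1 * u x + id x * u1 x) := by
      simp only [hG1def, id_eq, one_mul]; ring
    rw [heq]; exact h
  have hdG1 : ∀ x ∈ t, HasDerivAt G1 (G2 x) x := fun x hx => by
    have h := ((((hdf2 x hx).const_mul (3:ℝ)).add ((hasDerivAt_id x).mul (hdf3 x hx))).sub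
      (hdu x hx)).sub ((hasDerivAt_id x).mul (hdu1 x hx))
    have heq : G2 x = 3 * f3 x + (1 * f3 x + id x * f4 x) - u1 x - (1 * u1 x + id x * u2 x) := by
      simp only [hG2def, id_eq, one_mul]; ring
    rw [heq]; exact h
  have hG10 : G1 =ᶠ[nhds (0:ℝ)] (fun _ => (0:ℝ)) := by
    have h1' : deriv G =ᶠ[nhds (0:ℝ)] deriv (fun _ => (0:ℝ)) := hG0.deriv
    have h2' : deriv G =ᶠ[nhds (0:ℝ)] G1 := by
      filter_upwards [htn] with x hx
      exact (hdG x hx).deriv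
    filter_upwards [h1', h2'] with x hx1 hx2
    rw [← hx2, hx1, deriv_const]
  have hG20 : G2 =ᶠ[nhds (0:ℝ)] (fun _ => (0:ℝ)) := by
    have h1' : deriv G1 =ᶠ[nhds (0:ℝ)] deriv (fun _ => (0:ℝ)) := hG10.deriv
    have h2' : deriv G1 =ᶠ[nhds (0:ℝ)] G2 := by
      filter_upwards [htn] with x hx
      exact (hdG1 x hx).deriv
    filter_upwards [h1', h2'] with x hx1 hx2
    rw [← hx2, hx1, deriv_const]
  have hG1at0 : G1 0 = 0 := hG10.eq_of_nhds
  have hf20 : f2 0 = 1/3 := by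
    have h3 : 3 * f2 0 + 0 * f3 0 - u 0 - 0 * u1 0 = 0 := hG1at0
    simp only [hudef, h0, one_pow, zero_mul, add_zero, sub_zero] at h3
    linarith
  have hcy : ContinuousAt y 0 := (hyt.continuousOn.continuousAt htn)
  have hcf1 : ContinuousAt f1 0 := (hc1.continuousOn.continuousAt htn)
  have hcf2 : ContinuousAt f2 0 := (hc2.continuousOn.continuousAt htn)
  have hcf4 : ContinuousAt f4 0 := (hc4.continuousOn.continuousAt htn)
  have hcu2 : ContinuousAt u2 0 := by
    apply ContinuousAt.add
    · exact ((continuousAt_const.mul ((continuousAt_const.mul (hcy.pow _)).mul hcf1))).mul hcf1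
    · exact (continuousAt_const.mul (hcy.pow _)).mul hcf2
  have hdG2at0 : HasDerivAt G2 (4 * f4 0 + f4 0 - 2 * u2 0 - u2 0) 0 := by
    have hA := (hdf3 0 h0t).const_mul (4:ℝ)
    have hB := hasDerivAt_id_mul_of_continuousAt f4 hcf4
    have hC := (hdu1 0 h0t).const_mul (2:ℝ)
    have hD := hasDerivAt_id_mul_of_continuousAt u2 hcu2
    exact ((hA.add hB).sub hC).sub hD
  have hG2deriv0 : deriv G2 0 = 0 := by
    rw [hG20.deriv_eq, deriv_const]
  have hkey : 4 * f4 0 + f4 0 - 2 * u2 0 - u2 0 = 0 := by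
    rw [← hdG2at0.deriv]; exact hG2deriv0
  have hu20 : u2 0 = (n:ℝ) * (1/3) := by
    simp only [hu2def, h0, h1, one_pow, mul_zero, zero_mul, mul_one, zero_add, hf20]
  have hf40 : f4 0 = n / 5 := by
    rw [hu20] at hkey; linarith
  constructor
  · have e2 : (2:ℕ) = 1 + 1 := rfl
    rw [iteratedDeriv_succ, iteratedDeriv_one]
    exact hf20
  · have e4 : (4:ℕ) = 1 + 1 + 1 + 1 := rfl
    rw [iteratedDeriv_succ, iteratedDeriv_succ, iteratedDeriv_succ, iteratedDeriv_one]
    exact hf40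
end

section
/- Let y be a formal power series over ℚ with coefficients A₀, A₁, A₂, … such that A₀ = 0, A₁ = 0, and y satisfies the formal differential equation X·y'' + 2·y' + X·y = 6X + 12X² + X³ + X⁴, where y' and y'' denote the first and second formal derivatives of y. Then y = X² + X³, i.e., A₂ = 1, A₃ = 1, and A_m = 0 for all m ≠ 2, 3. -/
open PowerSeries in
theorem laneEmden_formal_example3 (y : ℚ⟦X⟧) (A : ℕ → ℚ) (hA : ∀ k, A k = coeff k y)
    (hA0 : A 0 = 0) (hA1 : A 1 = 0)
    (hode : X * (d⁄dX ℚ (d⁄dX ℚ y)) + 2 * (d⁄dX ℚ y) + X * y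
      = 6 * X + 12 * X ^ 2 + X ^ 3 + X ^ 4) :
    y = X ^ 2 + X ^ 3 ∧ A 2 = 1 ∧ A 3 = 1 ∧ ∀ m : ℕ, m ≠ 2 → m ≠ 3 → A m = 0 := by
  have e2 : (2 : ℚ⟦X⟧) = C 2 := by rw [map_ofNat]
  have e6 : (6 : ℚ⟦X⟧) = C 6 := by rw [map_ofNat]
  have e12 : (12 : ℚ⟦X⟧) = C 12 := by rw [map_ofNat]
  rw [e2, e6, e12] at hode
  have key : ∀ n : ℕ, A (n+2) * ((n:ℚ)+1+1) * ((n:ℚ)+1) + 2 * (A (n+2) * ((n:ℚ)+1+1)) + A n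
      = (((if n = 0 then 6 else 0) + if n = 1 then 12 else 0) + if n = 2 then 1 else 0)
        + if n = 3 then (1:ℚ) else 0 := by
    intro n
    have h := congrArg (coeff (n+1)) hode
    simp only [map_add, coeff_succ_X_mul, coeff_derivative, coeff_C_mul, coeff_C,
      coeff_X_pow, coeff_X] at h
    rw [hA n, hA (n+2)]
    push_cast at h
    simpa using h
  have h2 : A 2 = 1 := by have := key 0; rw [hA0] at this; norm_num at this; linarith
  have h3 : A 3 = 1 := by have := key 1; rw [hA1] at this; norm_num at this; linarith
  have h4 : A 4 = 0 := by have := key 2; rw [h2] at this; norm_num at this; linarith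
  have h5 : A 5 = 0 := by have := key 3; rw [h3] at this; norm_num at this; linarith
  have aux : ∀ m : ℕ, A (m + 4) = 0 ∧ A (m + 5) = 0 := by
    intro m
    induction m with
    | zero => exact ⟨h4, h5⟩
    | succ k ih =>
      refine ⟨ih.2, ?_⟩
      have hk := key (k + 4)
      have hne0 : (k:ℚ) + 4 + 1 + 1 ≠ 0 := by positivity
      have hne1 : 2 + ((k:ℚ) + 4 + 1) ≠ 0 := by positivity
      rw [ih.1] at hk
      simp only [Nat.add_eq, show k + 4 + 2 = k + 1 + 5 from by ring] at hk
      rw [if_neg (by omega), if_neg (by omega), if_neg (by omega), if_neg (by omega)] at hk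
      have : A (k + 1 + 5) * (((k:ℚ) + 4 + 1 + 1) * ((k:ℚ) + 4 + 1) + 2 * ((k:ℚ) + 4 + 1 + 1)) = 0 := by
        push_cast at hk; linear_combination hk
      rcases mul_eq_zero.mp this with h | h
      · exact h
      · exfalso
        have : ((k:ℚ) + 4 + 1 + 1) * ((k:ℚ) + 4 + 1) + 2 * ((k:ℚ) + 4 + 1 + 1) > 0 := by positivity
        linarith
  have hzero : ∀ m : ℕ, m ≠ 2 → m ≠ 3 → A m = 0 := by
    intro m hm2 hm3
    match m, hm2, hm3 with
    | 0, _, _ => exact hA0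
    | 1, _, _ => exact hA1
    | 2, h, _ => exact absurd rfl h
    | 3, _, h => exact absurd rfl h
    | (k+4), _, _ => exact (aux k).1
  refine ⟨?_, h2, h3, hzero⟩
  ext n
  rw [map_add, coeff_X_pow, coeff_X_pow, ← hA n]
  rcases eq_or_ne n 2 with rfl | hn2
  · simp [h2]
  rcases eq_or_ne n 3 with rfl | hn3
  · simp [h3]
  · simp [hn2, hn3, hzero n hn2 hn3]
end
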